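/- The unique solution of the Logarithmic Least Squares (LLSM) problem for an n×n pairwise comparison matrix is given by the geometric means of the rows: if A = [a_ij] is an n×n PCM, then the positive weight vector w = (w_1,…,w_n) with Σ_i w_i = 1 minimizing Σ_{i,j} ( log(a_ij) − log(w_i/w_j) )² is the unique normalized vector satisfying w_i / w_j = (Π_{k=1}^n a_ik)^{1/n} / (Π_{k=1}^n a_jk)^{1/n} for all i, j; equivalently, the normalized vector of row geometric means is the unique minimizer. -/

import Mathlib

/-- An `n × n` real matrix is a pairwise comparison matrix (PCM) if all entries are
positive and it is reciprocal: `A j i = 1 / A i j`. -/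
def IsPCM {n : ℕ} (A : Matrix (Fin n) (Fin n) ℝ) : Prop :=
  ∀ i j, 0 < A i j ∧ A j i = 1 / A i j

/-- The LLSM objective function: `w ↦ Σᵢⱼ (log aᵢⱼ - log (wᵢ / wⱼ))²`. -/
noncomputable def llsmObj {n : ℕ} (A : Matrix (Fin n) (Fin n) ℝ) (w : Fin n → ℝ) : ℝ :=
  ∑ i, ∑ j, (Real.log (A i j) - Real.log (w i / w j)) ^ 2

/-- The normalized vector of row geometric means of `A`. -/
noncomputable def gmWeights {n : ℕ} (A : Matrix (Fin n) (Fin n) ℝ) : Fin n → ℝ :=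
  fun i => (∏ k, A i k) ^ ((1 : ℝ) / n) / ∑ l, (∏ k, A l k) ^ ((1 : ℝ) / n)

/-- Cross term vanishes: if `e` is antisymmetric with zero row sums, then
`∑ᵢⱼ eᵢⱼ (xᵢ - xⱼ) = 0`. -/
lemma llsm_cross_zero {n : ℕ} (e : Fin n → Fin n → ℝ) (x : Fin n → ℝ)
    (hanti : ∀ i j, e j i = - e i j) (hrow : ∀ i, ∑ j, e i j = 0) :
    ∑ i, ∑ j, e i j * (x i - x j) = 0 := by
  have hcol : ∀ j, ∑ i, e i j = 0 := by
    intro j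
    calc ∑ i, e i j = ∑ i, -(e j i) := Finset.sum_congr rfl fun i _ => hanti j i
    _ = -∑ i, e j i := by rw [Finset.sum_neg_distrib]
    _ = 0 := by rw [hrow j, neg_zero]
  have h1 : ∑ i, ∑ j, e i j * x i = 0 := by
    refine Finset.sum_eq_zero fun i _ => ?_
    rw [← Finset.sum_mul, hrow i, zero_mul]
  have h2 : ∑ i, ∑ j, e i j * x j = 0 := by
    rw [Finset.sum_comm]
    refine Finset.sum_eq_zero fun j _ => ?_
    rw [← Finset.sum_mul, hcol j, zero_mul]
  calc ∑ i, ∑ j, e i j * (x i - x j)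
      = ∑ i, ∑ j, (e i j * x i - e i j * x j) := by
        refine Finset.sum_congr rfl fun i _ => Finset.sum_congr rfl fun j _ => ?_
        ring
    _ = (∑ i, ∑ j, e i j * x i) - ∑ i, ∑ j, e i j * x j := by
        rw [← Finset.sum_sub_distrib]
        exact Finset.sum_congr rfl fun i _ => Finset.sum_sub_distrib _ _
    _ = 0 := by rw [h1, h2, sub_zero]

/-- Decomposition: if `e` is antisymmetric with zero row sums, then
`∑ᵢⱼ (eᵢⱼ - (xᵢ - xⱼ))² = ∑ᵢⱼ eᵢⱼ² + ∑ᵢⱼ (xᵢ - xⱼ)²`. -/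
lemma llsm_decomp {n : ℕ} (e : Fin n → Fin n → ℝ) (x : Fin n → ℝ)
    (hanti : ∀ i j, e j i = - e i j) (hrow : ∀ i, ∑ j, e i j = 0) :
    ∑ i, ∑ j, (e i j - (x i - x j)) ^ 2
      = (∑ i, ∑ j, (e i j) ^ 2) + ∑ i, ∑ j, (x i - x j) ^ 2 := by
  have hcross := llsm_cross_zero e x hanti hrow
  have expand : ∀ i : Fin n, ∑ j, (e i j - (x i - x j)) ^ 2
      = ∑ j, ((e i j) ^ 2 + (x i - x j) ^ 2 - 2 * (e i j * (x i - x j))) := by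
    intro i
    refine Finset.sum_congr rfl fun j _ => ?_
    ring
  calc ∑ i, ∑ j, (e i j - (x i - x j)) ^ 2
      = ∑ i, ∑ j, ((e i j) ^ 2 + (x i - x j) ^ 2 - 2 * (e i j * (x i - x j))) :=
        Finset.sum_congr rfl fun i _ => expand i
    _ = (∑ i, ∑ j, ((e i j) ^ 2 + (x i - x j) ^ 2))
          - ∑ i, ∑ j, 2 * (e i j * (x i - x j)) := by
        rw [← Finset.sum_sub_distrib]
        exact Finset.sum_congr rfl fun i _ => Finset.sum_sub_distrib _ _
    _ = (∑ i, ∑ j, ((e i j) ^ 2 + (x i - x j) ^ 2)) - 2 * ∑ i, ∑ j, e i j * (x i - x j) := by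
        rw [Finset.mul_sum]
        congr 1
        exact Finset.sum_congr rfl fun i _ => (Finset.mul_sum _ _ _).symm
    _ = ∑ i, ∑ j, ((e i j) ^ 2 + (x i - x j) ^ 2) := by rw [hcross, mul_zero, sub_zero]
    _ = (∑ i, ∑ j, (e i j) ^ 2) + ∑ i, ∑ j, (x i - x j) ^ 2 := by
        rw [← Finset.sum_add_distrib]
        exact Finset.sum_congr rfl fun i _ => Finset.sum_add_distrib

/-- The unique solution of the LLSM problem for a PCM is the normalized vector of the
row geometric means: it is a feasible weight vector, it minimizes the LLSM objective
among all positive normalized weight vectors, every minimizer equals it, and a feasible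
vector minimizes the objective iff its ratios are the ratios of row geometric means. -/
theorem llsm_unique_solution_is_geometric_mean {n : ℕ} (hn : 0 < n)
    (A : Matrix (Fin n) (Fin n) ℝ) (hA : IsPCM A) :
    (∀ i, 0 < gmWeights A i) ∧ (∑ i, gmWeights A i = 1) ∧
    (∀ w : Fin n → ℝ, (∀ i, 0 < w i) → (∑ i, w i = 1) →
      llsmObj A (gmWeights A) ≤ llsmObj A w) ∧
    (∀ w : Fin n → ℝ, (∀ i, 0 < w i) → (∑ i, w i = 1) →
      llsmObj A w = llsmObj A (gmWeights A) → w = gmWeights A) ∧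
    (∀ w : Fin n → ℝ, (∀ i, 0 < w i) → (∑ i, w i = 1) →
      ((∀ i j, w i / w j =
          (∏ k, A i k) ^ ((1 : ℝ) / n) / (∏ k, A j k) ^ ((1 : ℝ) / n)) ↔
        w = gmWeights A)) := by
  have hne : Nonempty (Fin n) := ⟨⟨0, hn⟩⟩
  have hnR : (0 : ℝ) < n := by exact_mod_cast hn
  have hApos : ∀ i j, 0 < A i j := fun i j => (hA i j).1
  have hLanti : ∀ i j, Real.log (A j i) = - Real.log (A i j) := by
    intro i j
    rw [(hA i j).2, one_div, Real.log_inv]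
  have hprodpos : ∀ i : Fin n, 0 < ∏ k, A i k := fun i =>
    Finset.prod_pos fun k _ => hApos i k
  have hrpos : ∀ i : Fin n, 0 < (∏ k, A i k) ^ ((1 : ℝ) / n) := fun i =>
    Real.rpow_pos_of_pos (hprodpos i) _
  have hSpos : 0 < ∑ l, (∏ k, A l k) ^ ((1 : ℝ) / n) :=
    Finset.sum_pos (fun l _ => hrpos l) Finset.univ_nonempty
  have hgpos : ∀ i, 0 < gmWeights A i := fun i => div_pos (hrpos i) hSpos
  have hgsum : ∑ i, gmWeights A i = 1 := by
    unfold gmWeights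
    rw [← Finset.sum_div, div_self hSpos.ne']
  -- the "ideal" log-weights
  set y : Fin n → ℝ := fun i => (∑ k, Real.log (A i k)) / n with hy
  have hsumrow : ∀ i, ∑ j, Real.log (A i j) = n * y i := by
    intro i
    simp only [hy]
    field_simp
  have hLL : ∑ i, ∑ j, Real.log (A i j) = 0 := by
    have h1 : (∑ i, ∑ j, Real.log (A i j)) = - ∑ i, ∑ j, Real.log (A i j) := by
      calc (∑ i, ∑ j, Real.log (A i j)) = ∑ j, ∑ i, Real.log (A i j) := Finset.sum_comm
        _ = ∑ j, ∑ i, -(Real.log (A j i)) :=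
            Finset.sum_congr rfl fun j _ => Finset.sum_congr rfl fun i _ => hLanti j i
        _ = - ∑ j, ∑ i, Real.log (A j i) := by
            rw [← Finset.sum_neg_distrib]
            exact Finset.sum_congr rfl fun j _ => Finset.sum_neg_distrib _
        _ = - ∑ i, ∑ j, Real.log (A i j) := rfl
    linarith
  have hysum : ∑ j, y j = 0 := by
    simp only [hy]
    rw [← Finset.sum_div, hLL, zero_div]
  -- e has zero row sums and is antisymmetric
  have hrow : ∀ i, ∑ j, (Real.log (A i j) - y i + y j) = 0 := by
    intro i
    rw [Finset.sum_add_distrib, Finset.sum_sub_distrib, hsumrow i, hysum,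
      Finset.sum_const, Finset.card_univ, Fintype.card_fin, nsmul_eq_mul]
    ring
  have heanti : ∀ i j, (Real.log (A j i) - y j + y i) = -(Real.log (A i j) - y i + y j) := by
    intro i j
    rw [hLanti i j]
    ring
  -- log of the geometric-mean weights
  have hlogr : ∀ i, Real.log ((∏ k, A i k) ^ ((1 : ℝ) / n)) = y i := by
    intro i
    rw [Real.log_rpow (hprodpos i), Real.log_prod (fun k _ => (hApos i k).ne')]
    simp only [hy]
    ring
  have hlogg : ∀ i, Real.log (gmWeights A i)
      = y i - Real.log (∑ l, (∏ k, A l k) ^ ((1 : ℝ) / n)) := by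
    intro i
    unfold gmWeights
    rw [Real.log_div (hrpos i).ne' hSpos.ne', hlogr i]
  -- key decomposition of the objective
  have key : ∀ w : Fin n → ℝ, (∀ i, 0 < w i) →
      llsmObj A w = (∑ i, ∑ j, (Real.log (A i j) - y i + y j) ^ 2)
        + ∑ i, ∑ j, ((Real.log (w i) - y i) - (Real.log (w j) - y j)) ^ 2 := by
    intro w hw
    have hterm : ∀ i j : Fin n, (Real.log (A i j) - Real.log (w i / w j)) ^ 2
        = ((Real.log (A i j) - y i + y j)
            - ((Real.log (w i) - y i) - (Real.log (w j) - y j))) ^ 2 := by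
      intro i j
      rw [Real.log_div (hw i).ne' (hw j).ne']
      ring
    have := llsm_decomp (fun i j => Real.log (A i j) - y i + y j)
      (fun i => Real.log (w i) - y i) (fun i j => heanti i j) hrow
    calc llsmObj A w
        = ∑ i, ∑ j, ((Real.log (A i j) - y i + y j)
            - ((Real.log (w i) - y i) - (Real.log (w j) - y j))) ^ 2 := by
          unfold llsmObj
          exact Finset.sum_congr rfl fun i _ => Finset.sum_congr rfl fun j _ => hterm i j
      _ = _ := this
  -- the value at the geometric-mean weights
  have hgval : llsmObj A (gmWeights A) = ∑ i, ∑ j, (Real.log (A i j) - y i + y j) ^ 2 := by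
    rw [key (gmWeights A) hgpos]
    have h0 : ∀ i j : Fin n,
        ((Real.log (gmWeights A i) - y i) - (Real.log (gmWeights A j) - y j)) ^ 2 = 0 := by
      intro i j
      rw [hlogg i, hlogg j]
      ring
    rw [Finset.sum_eq_zero fun i _ => Finset.sum_eq_zero fun j _ => h0 i j, add_zero]
  -- equality of ratios forces equality of normalized vectors
  have ratio_eq : ∀ w : Fin n → ℝ, (∀ i, 0 < w i) → (∑ i, w i = 1) →
      (∀ i j, w i / w j = gmWeights A i / gmWeights A j) → w = gmWeights A := by
    intro w hw hwsum hrat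
    funext i
    have hmul : ∀ j, w i * gmWeights A j = gmWeights A i * w j := by
      intro j
      exact (div_eq_div_iff (hw j).ne' (hgpos j).ne').mp (hrat i j)
    calc w i = w i * ∑ j, gmWeights A j := by rw [hgsum, mul_one]
      _ = ∑ j, w i * gmWeights A j := Finset.mul_sum _ _ _
      _ = ∑ j, gmWeights A i * w j := Finset.sum_congr rfl fun j _ => hmul j
      _ = gmWeights A i * ∑ j, w j := (Finset.mul_sum _ _ _).symm
      _ = gmWeights A i := by rw [hwsum, mul_one]
  have hgratio : ∀ i j, gmWeights A i / gmWeights A j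
      = (∏ k, A i k) ^ ((1 : ℝ) / n) / (∏ k, A j k) ^ ((1 : ℝ) / n) := by
    intro i j
    unfold gmWeights
    rw [div_div_div_comm, div_self hSpos.ne', div_one]
  refine ⟨hgpos, hgsum, ?_, ?_, ?_⟩
  · -- minimality
    intro w hw hwsum
    rw [key w hw, hgval]
    have : 0 ≤ ∑ i, ∑ j, ((Real.log (w i) - y i) - (Real.log (w j) - y j)) ^ 2 :=
      Finset.sum_nonneg fun i _ => Finset.sum_nonneg fun j _ => sq_nonneg _
    linarith
  · -- uniqueness
    intro w hw hwsum heq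
    rw [key w hw, hgval] at heq
    have hzero : ∑ i, ∑ j, ((Real.log (w i) - y i) - (Real.log (w j) - y j)) ^ 2 = 0 := by
      linarith
    have hterm0 : ∀ i j : Fin n,
        ((Real.log (w i) - y i) - (Real.log (w j) - y j)) ^ 2 = 0 := by
      intro i j
      have h1 := (Finset.sum_eq_zero_iff_of_nonneg
        (fun i _ => Finset.sum_nonneg fun j _ => sq_nonneg _)).mp hzero i (Finset.mem_univ i)
      exact (Finset.sum_eq_zero_iff_of_nonneg
        (fun j _ => sq_nonneg _)).mp h1 j (Finset.mem_univ j)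
    refine ratio_eq w hw hwsum ?_
    intro i j
    have hd : Real.log (w i) - Real.log (w j) = y i - y j := by
      have := hterm0 i j
      have h2 : (Real.log (w i) - y i) - (Real.log (w j) - y j) = 0 := by
        exact pow_eq_zero_iff (two_ne_zero) |>.mp this
      linarith
    have hlw : Real.log (w i / w j) = Real.log (gmWeights A i / gmWeights A j) := by
      rw [Real.log_div (hw i).ne' (hw j).ne',
        Real.log_div (hgpos i).ne' (hgpos j).ne', hlogg i, hlogg j, hd]
      ring
    calc w i / w j = Real.exp (Real.log (w i / w j)) :=
          (Real.exp_log (div_pos (hw i) (hw j))).symm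
      _ = Real.exp (Real.log (gmWeights A i / gmWeights A j)) := by rw [hlw]
      _ = gmWeights A i / gmWeights A j :=
          Real.exp_log (div_pos (hgpos i) (hgpos j))
  · -- characterization
    intro w hw hwsum
    constructor
    · intro h
      refine ratio_eq w hw hwsum ?_
      intro i j
      rw [h i j, hgratio i j]
    · intro h i j
      rw [h, hgratio i j]
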